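/- Soundness of a filter-then-sort procedure: let P = sort^i_a ∘ filter_{b ≥ v}. Define x ⪰_P y iff there exists a list l containing both x and y such that in l' = P(l), either y does not occur in l', or every occurrence of y in l' is preceded by an occurrence of x. Then x ⪰_P y holds if and only if ¬(b(y) ≥ v) ∨ (b(x) ≥ v ∧ a(x) ≤ a(y)). -/

import Mathlib

theorem soundness_filter_sort {X V : Type*} [LinearOrder V] (a b : X → V) (v : V)
    (x y : X) (hxy : x ≠ y) :
    (∃ l : List X, x ∈ l ∧ y ∈ l ∧
      (let l' := List.mergeSort (List.filter (fun z => decide (v ≤ b z)) l)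
        (fun p q => decide (a p ≤ a q));
       ∀ j : ℕ, l'[j]? = some y → ∃ i < j, l'[i]? = some x)) ↔
    (¬ (v ≤ b y) ∨ (v ≤ b x ∧ a x ≤ a y)) := by
  constructor
  · rintro ⟨l, hx, hy, h⟩
    by_cases hby : v ≤ b y
    · right
      set l' := List.mergeSort (List.filter (fun z => decide (v ≤ b z)) l)
        (fun p q => decide (a p ≤ a q)) with hl'
      have hyl' : y ∈ l' := by
        rw [hl', List.mem_mergeSort, List.mem_filter]
        exact ⟨hy, by simpa⟩
      obtain ⟨j, hj⟩ := List.mem_iff_getElem?.mp hyl'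
      obtain ⟨i, hij, hi⟩ := h j hj
      have hxl' : x ∈ l' := List.mem_iff_getElem?.mpr ⟨i, hi⟩
      have hbx : v ≤ b x := by
        rw [hl', List.mem_mergeSort, List.mem_filter] at hxl'
        simpa using hxl'.2
      refine ⟨hbx, ?_⟩
      have hsorted : l'.Pairwise (fun p q => (decide (a p ≤ a q) : Bool)) :=
        List.pairwise_mergeSort
          (fun p q r h1 h2 => by
            simp only [decide_eq_true_eq] at *; exact le_trans h1 h2)
          (fun p q => by
            simp only [Bool.or_eq_true, decide_eq_true_eq]; exact le_total (a p) (a q)) _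
      rw [List.pairwise_iff_get] at hsorted
      have hjlen : j < l'.length := (List.getElem?_eq_some_iff.mp hj).1
      have hilen : i < l'.length := (List.getElem?_eq_some_iff.mp hi).1
      have := hsorted ⟨i, hilen⟩ ⟨j, hjlen⟩ hij
      have hgi : l'.get ⟨i, hilen⟩ = x := by
        have := List.getElem?_eq_getElem hilen
        rw [this] at hi; exact Option.some_injective _ hi
      have hgj : l'.get ⟨j, hjlen⟩ = y := by
        have := List.getElem?_eq_getElem hjlen
        rw [this] at hj; exact Option.some_injective _ hj
      rw [hgi, hgj] at this
      simpa using this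
    · exact Or.inl hby
  · intro h
    refine ⟨[x, y], by simp, by simp, ?_⟩
    show ∀ j, (List.mergeSort (List.filter (fun z => decide (v ≤ b z)) [x, y])
        (fun p q => decide (a p ≤ a q)))[j]? = some y → ∃ i < j,
        (List.mergeSort (List.filter (fun z => decide (v ≤ b z)) [x, y])
        (fun p q => decide (a p ≤ a q)))[i]? = some x
    intro j hj
    by_cases hby : v ≤ b y
    · rcases h with h | ⟨hbx, haxy⟩
      · exact absurd hby h
      · have hfilt : List.filter (fun z => decide (v ≤ b z)) [x, y] = [x, y] := by
          simp [List.filter, hbx, hby]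
        have hsort : List.mergeSort [x, y] (fun p q => decide (a p ≤ a q)) = [x, y] := by
          simp [List.mergeSort, List.merge, haxy]
        rw [hfilt, hsort] at hj ⊢
        match j, hj with
        | 0, hj => exact absurd (Option.some_injective _ hj) hxy
        | 1, _ => exact ⟨0, by norm_num, rfl⟩
        | (n+2), hj => simp at hj
    · exfalso
      have : y ∈ List.mergeSort (List.filter (fun z => decide (v ≤ b z)) [x, y])
          (fun p q => decide (a p ≤ a q)) := List.mem_iff_getElem?.mpr ⟨j, hj⟩
      rw [List.mem_mergeSort, List.mem_filter] at this
      exact hby (by simpa using this.2)
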